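/- Let D = diag(d_1,…,d_M) with all d_i > 0, let h > 0 and τ ∈ (0,2), and suppose u, v, f ∈ ℝ^M satisfy (v − u)/τ = (1/(2h^α))·D·G_α·(u + v) + f. Then ‖v‖²_{D⁻¹} ≤ ((2+τ)/(2−τ))·‖u‖²_{D⁻¹} + (2τ/(2−τ))·‖f‖²_{D⁻¹}, where ‖w‖²_{D⁻¹} = h·wᵀD⁻¹w. -/

import Mathlib

open Finset


open Matrix

/-- The Grünwald–Letnikov coefficients `g_k^{(α)}`. -/
noncomputable def gcoef (α : ℝ) : ℕ → ℝ
  | 0 => 1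
  | (k+1) => (1 - (α + 1) / (k + 1 : ℕ)) * gcoef α k

/-- The WSGD coefficients `w_k^{(α)}`. -/
noncomputable def wcoef (α : ℝ) : ℕ → ℝ
  | 0 => α / 2 * gcoef α 0
  | (k+1) => α / 2 * gcoef α (k+1) + (2 - α) / 2 * gcoef α k

/-- The `M × M` lower-Hessenberg Toeplitz matrix `G_α`. -/
noncomputable def Gmat (α : ℝ) (M : ℕ) : Matrix (Fin M) (Fin M) ℝ :=
  Matrix.of fun i j => if (j : ℕ) ≤ (i : ℕ) + 1 then wcoef α ((i : ℕ) + 1 - (j : ℕ)) else 0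

lemma gcoef_zero (α : ℝ) : gcoef α 0 = 1 := rfl

lemma gcoef_succ (α : ℝ) (k : ℕ) :
    gcoef α (k+1) = (1 - (α + 1) / ((k : ℝ) + 1)) * gcoef α k := by
  rw [gcoef]; push_cast; ring_nf

lemma gid (α : ℝ) (n : ℕ) :
    gcoef α (n+1) = -(α/((n:ℝ)+1)) * gcoef (α-1) n := by
  induction n with
  | zero =>
    rw [gcoef_succ]; show _ = _ * gcoef (α-1) 0
    rw [gcoef_zero, gcoef_zero]; push_cast; ring
  | succ n ih =>
    rw [gcoef_succ, ih, gcoef_succ (α-1)]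
    have h1 : ((n:ℝ)+1) ≠ 0 := by positivity
    have h2 : ((n:ℝ)+1+1) ≠ 0 := by positivity
    push_cast
    field_simp
    ring

lemma gsum (α : ℝ) (n : ℕ) :
    ∑ k ∈ Finset.range (n+1), gcoef α k = gcoef (α-1) n := by
  induction n with
  | zero => simp [gcoef_zero]
  | succ n ih =>
    rw [Finset.sum_range_succ, ih, gid, gcoef_succ (α-1)]
    ring

lemma gneg (α : ℝ) (hα : α ∈ Set.Ioo (1:ℝ) 2) :
    ∀ n, 1 ≤ n → gcoef (α-1) n ≤ 0 := by
  intro n hn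
  induction n with
  | zero => omega
  | succ n ih =>
    rcases Nat.eq_zero_or_pos n with h0 | h0
    · subst h0
      rw [gcoef_succ, gcoef_zero]
      nlinarith [hα.1]
    · rw [gcoef_succ (α-1)]
      have hg := ih h0
      have hf : 0 ≤ 1 - (α - 1 + 1) / ((n:ℝ)+1) := by
        have : (α - 1 + 1) / ((n:ℝ)+1) ≤ 1 := by
          rw [div_le_one (by positivity)]
          have : (1:ℝ) ≤ (n:ℝ) := by exact_mod_cast h0
          nlinarith [hα.2]
        linarith
      exact mul_nonpos_of_nonneg_of_nonpos hf hg

lemma gpos (α : ℝ) (hα : α ∈ Set.Ioo (1:ℝ) 2) (n : ℕ) (hn : 2 ≤ n) :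
    0 ≤ gcoef α n := by
  obtain ⟨m, rfl⟩ : ∃ m, n = m + 1 := ⟨n - 1, by omega⟩
  rw [gid]
  have h1 : gcoef (α-1) m ≤ 0 := gneg α hα m (by omega)
  have h2 : 0 < α / ((m:ℝ)+1) := by
    have := hα.1; positivity
  nlinarith

lemma wsum (α : ℝ) (n : ℕ) (hn : 1 ≤ n) :
    ∑ m ∈ Finset.range (n+1), wcoef α m
      = α/2 * gcoef (α-1) n + (2-α)/2 * gcoef (α-1) (n-1) := by
  have key : ∀ n : ℕ, ∑ m ∈ Finset.range (n+1), wcoef α m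
      = α/2 * (∑ k ∈ Finset.range (n+1), gcoef α k)
        + (2-α)/2 * (∑ k ∈ Finset.range n, gcoef α k) := by
    intro n
    induction n with
    | zero => simp [wcoef]
    | succ n ih =>
      rw [Finset.sum_range_succ, ih, wcoef]
      rw [Finset.sum_range_succ (gcoef α) (n+1), Finset.sum_range_succ (gcoef α) n]
      ring
  obtain ⟨m, rfl⟩ : ∃ m, n = m + 1 := ⟨n - 1, by omega⟩
  rw [key, gsum, gsum]
  simp

lemma w1neg (α : ℝ) (hα : α ∈ Set.Ioo (1:ℝ) 2) : wcoef α 1 ≤ 0 := by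
  show α / 2 * gcoef α 1 + (2 - α) / 2 * gcoef α 0 ≤ 0
  rw [gcoef_zero, gcoef_succ, gcoef_zero]
  push_cast
  nlinarith [hα.1, hα.2]

lemma w0w2 (α : ℝ) (hα : α ∈ Set.Ioo (1:ℝ) 2) : 0 ≤ wcoef α 0 + wcoef α 2 := by
  show 0 ≤ α/2 * gcoef α 0 + (α / 2 * gcoef α 2 + (2 - α) / 2 * gcoef α 1)
  rw [gcoef_zero, gcoef_succ, gcoef_succ, gcoef_zero]
  push_cast
  have h1 := hα.1
  have h2 := hα.2
  have e : α / 2 * 1 + (α / 2 * ((1 - (α + 1) / (1 + 1)) * ((1 - (α + 1) / (0 + 1)) * 1)) + (2 - α) / 2 * ((1 - (α + 1) / (0 + 1)) * 1)) = α * (α + 2) * (α - 1) / 4 := by ring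
  rw [e]
  nlinarith [h1, h2, mul_pos (by linarith : (0:ℝ) < α) (by linarith : (0:ℝ) < α + 2)]

lemma wpos (α : ℝ) (hα : α ∈ Set.Ioo (1:ℝ) 2) (n : ℕ) (hn : 3 ≤ n) :
    0 ≤ wcoef α n := by
  obtain ⟨m, rfl⟩ : ∃ m, n = m + 1 := ⟨n - 1, by omega⟩
  show 0 ≤ α / 2 * gcoef α (m+1) + (2 - α) / 2 * gcoef α m
  have h1 := gpos α hα (m+1) (by omega)
  have h2 := gpos α hα m (by omega)
  nlinarith [hα.1, hα.2]

lemma Wneg (α : ℝ) (hα : α ∈ Set.Ioo (1:ℝ) 2) (n : ℕ) (hn : 2 ≤ n) :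
    ∑ m ∈ Finset.range (n+1), wcoef α m ≤ 0 := by
  rw [wsum α n (by omega)]
  have h1 := gneg α hα n (by omega)
  have h2 := gneg α hα (n-1) (by omega)
  nlinarith [hα.1, hα.2]

lemma w0pos (α : ℝ) (hα : α ∈ Set.Ioo (1:ℝ) 2) : 0 ≤ wcoef α 0 := by
  show 0 ≤ α/2 * gcoef α 0
  rw [gcoef_zero]; nlinarith [hα.1]

lemma rowG (w : ℕ → ℝ) (M a : ℕ) (ha : a < M) :
    ∑ n ∈ Finset.range M, (if n ≤ a+1 then w (a+1-n) else 0)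
    = if a + 2 ≤ M then ∑ m ∈ Finset.range (a+2), w m
      else ∑ m ∈ Finset.range M, w (m+1) := by
  by_cases hc : a + 2 ≤ M
  · rw [if_pos hc]
    rw [← Finset.sum_subset (Finset.range_subset_range.mpr hc)
      (by intro n _ hn; simp only [Finset.mem_range, not_lt] at hn; rw [if_neg (by omega)])]
    rw [Finset.sum_congr rfl (fun n hn => by
      simp only [Finset.mem_range] at hn; rw [if_pos (by omega)])]
    rw [← Finset.sum_range_reflect]
    apply Finset.sum_congr rfl
    intro n hn
    simp only [Finset.mem_range] at hn
    congr 1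
    omega
  · rw [if_neg hc]
    have haM : a + 1 = M := by omega
    rw [Finset.sum_congr rfl (fun n hn => by
      simp only [Finset.mem_range] at hn; rw [if_pos (by omega)])]
    rw [← Finset.sum_range_reflect (fun m => w (m+1)) M]
    apply Finset.sum_congr rfl
    intro n hn
    simp only [Finset.mem_range] at hn
    congr 1
    omega

lemma colG (w : ℕ → ℝ) (M a : ℕ) (ha : a < M) :
    ∑ n ∈ Finset.range M, (if a ≤ n+1 then w (n+1-a) else 0)
    = if a = 0 then ∑ m ∈ Finset.range M, w (m+1)
      else ∑ m ∈ Finset.range (M-a+1), w m := by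
  by_cases hc : a = 0
  · subst hc
    rw [if_pos rfl]
    exact Finset.sum_congr rfl (fun n _ => by rw [if_pos (by omega)]; congr 1)
  · rw [if_neg hc]
    have h1 : 1 ≤ a := by omega
    rw [Finset.range_eq_Ico, ← Finset.sum_Ico_consecutive _ (Nat.zero_le (a-1)) (by omega : a - 1 ≤ M)]
    have e0 : ∑ n ∈ Finset.Ico 0 (a-1), (if a ≤ n+1 then w (n+1-a) else 0) = 0 := by
      apply Finset.sum_eq_zero
      intro n hn
      rw [Finset.mem_Ico] at hn
      rw [if_neg (by omega)]
    rw [e0, zero_add, Finset.sum_Ico_eq_sum_range]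
    have eM : M - (a-1) = M - a + 1 := by omega
    rw [eM]
    apply Finset.sum_congr rfl
    intro n hn
    simp only [Finset.mem_range] at hn
    rw [if_pos (by omega)]
    congr 1
    omega

lemma shiftsum (α : ℝ) (M : ℕ) :
    ∑ m ∈ Finset.range M, wcoef α (m+1)
      = ∑ m ∈ Finset.range (M+1), wcoef α m - wcoef α 0 := by
  rw [Finset.sum_range_succ' (wcoef α) M]
  ring

lemma Trow (α : ℝ) (hα : α ∈ Set.Ioo (1:ℝ) 2) (M : ℕ) (i : Fin M) :
    ∑ j : Fin M, (Gmat α M i j + Gmat α M j i) ≤ 0 := by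
  rw [Finset.sum_add_distrib]
  have e1 : ∑ j : Fin M, Gmat α M i j
      = ∑ n ∈ Finset.range M, (if n ≤ (i:ℕ)+1 then wcoef α ((i:ℕ)+1-n) else 0) :=
    Fin.sum_univ_eq_sum_range (fun n => if n ≤ (i:ℕ)+1 then wcoef α ((i:ℕ)+1-n) else 0) M
  have e2 : ∑ j : Fin M, Gmat α M j i
      = ∑ n ∈ Finset.range M, (if (i:ℕ) ≤ n+1 then wcoef α (n+1-(i:ℕ)) else 0) :=
    Fin.sum_univ_eq_sum_range (fun n => if (i:ℕ) ≤ n+1 then wcoef α (n+1-(i:ℕ)) else 0) M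
  rw [e1, e2, rowG (wcoef α) M i i.isLt, colG (wcoef α) M i i.isLt]
  set a := (i:ℕ) with haa
  have ha : a < M := i.isLt
  by_cases hc1 : a + 2 ≤ M
  · rw [if_pos hc1]
    by_cases hc2 : a = 0
    · rw [if_pos hc2, hc2, shiftsum]
      have hW := Wneg α hα M (by omega)
      have h2 : ∑ m ∈ Finset.range (0+2), wcoef α m = wcoef α 0 + wcoef α 1 := by
        simp [Finset.sum_range_succ]
      rw [h2]
      have hw1 := w1neg α hα
      linarith
    · rw [if_neg hc2]
      have hW1 := Wneg α hα (a+1) (by omega)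
      have hW2 := Wneg α hα (M-a) (by omega)
      have e3 : M - a + 1 = (M - a) + 1 := rfl
      have e4 : a + 2 = (a+1) + 1 := rfl
      rw [e3, e4]
      linarith
  · -- a = M - 1
    rw [if_neg hc1]
    by_cases hc2 : a = 0
    · -- M = 1
      rw [if_pos hc2]
      have hM1 : M = 1 := by omega
      subst hM1
      simp only [Finset.sum_range_succ, Finset.sum_range_zero, zero_add]
      have hw1 := w1neg α hα
      linarith
    · rw [if_neg hc2, shiftsum]
      have hMa : M - a + 1 = 2 := by omega
      rw [hMa]
      have h2 : ∑ m ∈ Finset.range 2, wcoef α m = wcoef α 0 + wcoef α 1 := by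
        simp [Finset.sum_range_succ]
      rw [h2]
      have hW := Wneg α hα M (by omega)
      have hw1 := w1neg α hα
      linarith

lemma Toff (α : ℝ) (hα : α ∈ Set.Ioo (1:ℝ) 2) (M : ℕ) (i j : Fin M) (hij : i ≠ j) :
    0 ≤ Gmat α M i j + Gmat α M j i := by
  have hij' : (i:ℕ) ≠ (j:ℕ) := fun h => hij (Fin.ext h)
  simp only [Gmat, Matrix.of_apply]
  rcases lt_trichotomy (i:ℕ) (j:ℕ) with hab | hab | hab
  · by_cases h1 : (j:ℕ) = (i:ℕ)+1
    · rw [if_pos (by omega), if_pos (by omega)]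
      have e1 : (i:ℕ)+1-(j:ℕ) = 0 := by omega
      have e2 : (j:ℕ)+1-(i:ℕ) = 2 := by omega
      rw [e1, e2]
      exact w0w2 α hα
    · rw [if_neg (by omega), if_pos (by omega), zero_add]
      exact wpos α hα _ (by omega)
  · exact absurd hab hij'
  · by_cases h1 : (i:ℕ) = (j:ℕ)+1
    · rw [if_pos (by omega), if_pos (by omega)]
      have e1 : (i:ℕ)+1-(j:ℕ) = 2 := by omega
      have e2 : (j:ℕ)+1-(i:ℕ) = 0 := by omega
      rw [e1, e2]
      have := w0w2 α hα
      linarith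
    · rw [if_pos (by omega), if_neg (by omega), add_zero]
      exact wpos α hα _ (by omega)

lemma quad (α : ℝ) (hα : α ∈ Set.Ioo (1:ℝ) 2) (M : ℕ) (x : Fin M → ℝ) :
    x ⬝ᵥ (Gmat α M *ᵥ x) ≤ 0 := by
  have expand : x ⬝ᵥ (Gmat α M *ᵥ x) = ∑ i, ∑ j, Gmat α M i j * (x i * x j) := by
    simp only [dotProduct, mulVec]
    apply Finset.sum_congr rfl
    intro i _
    rw [Finset.mul_sum]
    apply Finset.sum_congr rfl
    intro j _
    ring
  have swap : ∑ i, ∑ j, Gmat α M j i * (x i * x j)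
      = ∑ i, ∑ j, Gmat α M i j * (x i * x j) := by
    rw [Finset.sum_comm]
    apply Finset.sum_congr rfl
    intro i _
    apply Finset.sum_congr rfl
    intro j _
    ring
  have twice : 2 * (x ⬝ᵥ (Gmat α M *ᵥ x))
      = ∑ i, ∑ j, (Gmat α M i j + Gmat α M j i) * (x i * x j) := by
    simp only [add_mul, Finset.sum_add_distrib]
    rw [swap, expand]
    ring
  have step1 : ∑ i, ∑ j, (Gmat α M i j + Gmat α M j i) * (x i * x j)
      ≤ ∑ i, ∑ j, (Gmat α M i j + Gmat α M j i) * ((x i ^ 2 + x j ^ 2) / 2) := by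
    apply Finset.sum_le_sum
    intro i _
    apply Finset.sum_le_sum
    intro j _
    by_cases hij : i = j
    · subst hij; apply le_of_eq; ring
    · have hT := Toff α hα M i j hij
      nlinarith [sq_nonneg (x i - x j)]
  have swap2 : ∑ i, ∑ j, (Gmat α M i j + Gmat α M j i) * (x j ^ 2)
      = ∑ i, ∑ j, (Gmat α M i j + Gmat α M j i) * (x i ^ 2) := by
    rw [Finset.sum_comm]
    apply Finset.sum_congr rfl
    intro i _
    apply Finset.sum_congr rfl
    intro j _
    ring
  have step2 : ∑ i, ∑ j, (Gmat α M i j + Gmat α M j i) * ((x i ^ 2 + x j ^ 2) / 2)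
      = ∑ i, (∑ j, (Gmat α M i j + Gmat α M j i)) * x i ^ 2 := by
    calc ∑ i, ∑ j, (Gmat α M i j + Gmat α M j i) * ((x i ^ 2 + x j ^ 2) / 2)
        = (∑ i, ∑ j, (Gmat α M i j + Gmat α M j i) * x i ^ 2
            + ∑ i, ∑ j, (Gmat α M i j + Gmat α M j i) * x j ^ 2) / 2 := by
          rw [← Finset.sum_add_distrib, Finset.sum_div]
          apply Finset.sum_congr rfl
          intro i _
          rw [← Finset.sum_add_distrib, Finset.sum_div]
          apply Finset.sum_congr rfl
          intro j _
          ring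
      _ = ∑ i, ∑ j, (Gmat α M i j + Gmat α M j i) * x i ^ 2 := by rw [swap2]; ring
      _ = ∑ i, (∑ j, (Gmat α M i j + Gmat α M j i)) * x i ^ 2 := by
          apply Finset.sum_congr rfl
          intro i _
          rw [Finset.sum_mul]
  have step3 : ∑ i, (∑ j, (Gmat α M i j + Gmat α M j i)) * x i ^ 2 ≤ 0 := by
    apply Finset.sum_nonpos
    intro i _
    exact mul_nonpos_of_nonpos_of_nonneg (Trow α hα M i) (sq_nonneg _)
  nlinarith [twice, step1, step2, step3]


/-- One Crank–Nicolson step estimate: if `(v−u)/τ = (1/(2hᵅ)) D G_α (u+v) + f` with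
`D = diag(d_i)`, `d_i > 0`, `h > 0`, `τ ∈ (0,2)`, then
`‖v‖²_{D⁻¹} ≤ ((2+τ)/(2−τ))‖u‖²_{D⁻¹} + (2τ/(2−τ))‖f‖²_{D⁻¹}`
where `‖w‖²_{D⁻¹} = h wᵀ D⁻¹ w`. -/
theorem CN_one_step_estimate (α : ℝ) (hα : α ∈ Set.Ioo (1 : ℝ) 2)
    (M : ℕ) (hM : 0 < M) (d : Fin M → ℝ) (hd : ∀ i, 0 < d i)
    (h τ : ℝ) (hh : 0 < h) (hτ : τ ∈ Set.Ioo (0 : ℝ) 2)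
    (u v f : Fin M → ℝ)
    (heq : (1 / τ) • (v - u) =
      (1 / (2 * h ^ α)) • (Matrix.diagonal d *ᵥ (Gmat α M *ᵥ (u + v))) + f) :
    h * (v ⬝ᵥ (Matrix.diagonal (fun i => (d i)⁻¹) *ᵥ v)) ≤
      (2 + τ) / (2 - τ) * (h * (u ⬝ᵥ (Matrix.diagonal (fun i => (d i)⁻¹) *ᵥ u))) +
      2 * τ / (2 - τ) * (h * (f ⬝ᵥ (Matrix.diagonal (fun i => (d i)⁻¹) *ᵥ f))) := by
  have hτ0 : 0 < τ := hτ.1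
  have hτ2 : τ < 2 := hτ.2
  have hτne : τ ≠ 0 := ne_of_gt hτ0
  have hc : 0 < 2 * h ^ α := by positivity
  set z := Gmat α M *ᵥ (u + v) with hzdef
  have hcomp : ∀ i, (1/τ) * (v i - u i) = (1/(2*h^α)) * (d i * z i) + f i := by
    intro i
    have h1 := congrFun heq i
    simpa [Matrix.mulVec_diagonal] using h1
  have hq : ∑ i, (u i + v i) * z i ≤ 0 := by
    have h1 := quad α hα M (u + v)
    rw [← hzdef] at h1
    simpa [dotProduct] using h1
  have e : ∀ i, (u i + v i) * ((1/τ)*(v i - u i) - f i) / d i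
      = (1/(2*h^α)) * ((u i + v i) * z i) := by
    intro i
    have h1 := hcomp i
    have hdi : d i ≠ 0 := ne_of_gt (hd i)
    have h2 : (1/τ)*(v i - u i) - f i = (1/(2*h^α)) * (d i * z i) := by linarith
    rw [h2]
    field_simp
  have key1 : ∑ i, (u i + v i) * ((1/τ)*(v i - u i) - f i) / d i ≤ 0 := by
    calc ∑ i, (u i + v i) * ((1/τ)*(v i - u i) - f i) / d i
        = (1/(2*h^α)) * ∑ i, (u i + v i) * z i := by
          rw [Finset.mul_sum]
          exact Finset.sum_congr rfl (fun i _ => e i)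
      _ ≤ 0 := mul_nonpos_of_nonneg_of_nonpos (by positivity) hq
  have e2 : ∀ i, (u i + v i) * ((1/τ)*(v i - u i) - f i) / d i
      = (1/τ) * (v i^2/d i) - (1/τ)*(u i^2/d i) - (u i + v i)*f i/d i := by
    intro i
    have hdi : d i ≠ 0 := ne_of_gt (hd i)
    field_simp
    ring
  simp only [e2] at key1
  rw [Finset.sum_sub_distrib, Finset.sum_sub_distrib, ← Finset.mul_sum, ← Finset.mul_sum] at key1
  set A := ∑ i, u i^2 / d i with hA
  set B := ∑ i, v i^2 / d i with hB
  set C := ∑ i, f i^2 / d i with hC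
  have key3 : ∑ i, (u i + v i)*f i/d i ≤ A/2 + B/2 + C := by
    have e3 : ∀ i ∈ Finset.univ, (u i + v i)*f i/d i
        ≤ u i^2/d i/2 + v i^2/d i/2 + f i^2/d i := by
      intro i _
      have hdi := hd i
      have h4 : (u i + v i)*f i ≤ u i^2/2 + v i^2/2 + f i^2 := by
        nlinarith [sq_nonneg (u i - f i), sq_nonneg (v i - f i)]
      calc (u i + v i)*f i/d i ≤ (u i^2/2 + v i^2/2 + f i^2)/d i :=
            (div_le_div_iff_of_pos_right hdi).mpr h4
        _ = u i^2/d i/2 + v i^2/d i/2 + f i^2/d i := by ring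
    calc ∑ i, (u i + v i)*f i/d i
        ≤ ∑ i, (u i^2/d i/2 + v i^2/d i/2 + f i^2/d i) := Finset.sum_le_sum e3
      _ = A/2 + B/2 + C := by
          rw [Finset.sum_add_distrib, Finset.sum_add_distrib, hA, hB, hC,
            Finset.sum_div, Finset.sum_div]
  have h5 : (1/τ)*B - (1/τ)*A ≤ A/2 + B/2 + C := by linarith
  have h6 : B - A ≤ τ*(A/2 + B/2 + C) := by
    have h7 := mul_le_mul_of_nonneg_left h5 hτ0.le
    calc B - A = τ * ((1/τ)*B - (1/τ)*A) := by field_simp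
      _ ≤ τ*(A/2+B/2+C) := h7
  have eB : v ⬝ᵥ (Matrix.diagonal (fun i => (d i)⁻¹) *ᵥ v) = B := by
    rw [hB]
    simp only [dotProduct, Matrix.mulVec_diagonal]
    exact Finset.sum_congr rfl (fun i _ => by rw [div_eq_mul_inv]; ring)
  have eA : u ⬝ᵥ (Matrix.diagonal (fun i => (d i)⁻¹) *ᵥ u) = A := by
    rw [hA]
    simp only [dotProduct, Matrix.mulVec_diagonal]
    exact Finset.sum_congr rfl (fun i _ => by rw [div_eq_mul_inv]; ring)
  have eC : f ⬝ᵥ (Matrix.diagonal (fun i => (d i)⁻¹) *ᵥ f) = C := by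
    rw [hC]
    simp only [dotProduct, Matrix.mulVec_diagonal]
    exact Finset.sum_congr rfl (fun i _ => by rw [div_eq_mul_inv]; ring)
  rw [eA, eB, eC]
  have h2τ : 0 < 2 - τ := by linarith
  rw [div_mul_eq_mul_div, div_mul_eq_mul_div, ← add_div, le_div_iff₀ h2τ]
  nlinarith [mul_le_mul_of_nonneg_left h6 hh.le]
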